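/- Let f, g ∈ A = MvPolynomial (Fin (2n)) (Polynomial ℂ) be polynomials whose total degree in the y-variables is at most 2. Then their Moyal commutator equals ℏ times their Poisson bracket with no higher corrections: f ⋆ g − g ⋆ f = ℏ · ∑_{i, j ∈ Fin(2n)} ω̂(i, j) · (∂_i f) · (∂_j g). In particular the Moyal commutator of two polynomials of y-degree at most 2 again has y-degree at most 2; this underlies the embedding of sp_{2n} into the Weyl algebra acting by inner derivations. -/

import Mathlib

noncomputable section

/-- The polynomial Weyl algebra carrier: polynomials in `y₀, …, y_{2n−1}` with
coefficients in `ℂ[ℏ]` (where `ℏ = Polynomial.X`). -/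
abbrev WeylPoly (n : ℕ) := MvPolynomial (Fin (2*n)) (Polynomial ℂ)

/-- The standard symplectic matrix `ω̂`: `ω̂(i,j) = 1` if `j = i + n`, `−1` if
`i = j + n`, and `0` otherwise. -/
def omegaHat (n : ℕ) (i j : Fin (2*n)) : ℂ :=
  if (j : ℕ) = (i : ℕ) + n then 1 else if (i : ℕ) = (j : ℕ) + n then -1 else 0

/-- Iterated partial derivative `∂_{v 0} ⋯ ∂_{v (m−1)}`. -/
def multiDeriv {n m : ℕ} (v : Fin m → Fin (2*n)) (f : WeylPoly n) : WeylPoly n :=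
  (List.ofFn v).foldr (fun i g => MvPolynomial.pderiv i g) f

/-- The Moyal product
`f ⋆ g = ∑_{m} (ℏ^m / (2^m m!)) ∑_{i₁,…,i_m} ∑_{j₁,…,j_m} (∏_s ω̂(i_s, j_s)) ·
(∂_{i₁} ⋯ ∂_{i_m} f) · (∂_{j₁} ⋯ ∂_{j_m} g)`; the sum over `m` is truncated at
`totalDegree f`, beyond which all terms vanish. -/
def moyal (n : ℕ) (f g : WeylPoly n) : WeylPoly n :=
  ∑ m ∈ Finset.range (f.totalDegree + 1),
    MvPolynomial.C (Polynomial.C (1 / ((2:ℂ)^m * (Nat.factorial m : ℂ))) * Polynomial.X ^ m) *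
      ∑ v : Fin m → Fin (2*n), ∑ w : Fin m → Fin (2*n),
        MvPolynomial.C (Polynomial.C (∏ s : Fin m, omegaHat n (v s) (w s))) *
          (multiDeriv v f * multiDeriv w g)

open MvPolynomial Polynomial Finset

lemma totalDegree_pderiv_le {σ R : Type*} [CommSemiring R] (i : σ) (f : MvPolynomial σ R) :
    (pderiv i f).totalDegree ≤ f.totalDegree - 1 := by
  classical
  conv_lhs => rw [f.as_sum]
  rw [map_sum]
  refine (totalDegree_finset_sum _ _).trans (Finset.sup_le fun s hs => ?_)
  rw [pderiv_monomial]
  rcases eq_or_ne (s i) 0 with h | h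
  · simp [h]
  · refine (totalDegree_monomial_le _ _).trans ?_
    have h1 : Finsupp.single i 1 ≤ s := Finsupp.single_le_iff.mpr (Nat.one_le_iff_ne_zero.mpr h)
    have h2 : (s - Finsupp.single i 1) + Finsupp.single i 1 = s := tsub_add_cancel_of_le h1
    have h3 : ((s - Finsupp.single i 1) + Finsupp.single i 1).sum (fun _ e => e)
        = (s - Finsupp.single i 1).sum (fun _ e => e) + 1 := by
      rw [Finsupp.sum_add_index' (fun _ => rfl) (fun _ _ _ => rfl), Finsupp.sum_single_index rfl]
    have h4 : s.sum (fun _ e => e) ≤ f.totalDegree := le_totalDegree hs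
    rw [h2] at h3
    have : (s - Finsupp.single i 1).sum (fun _ e => e) ≤ f.totalDegree - 1 := by omega
    simpa [Finsupp.sum] using this

lemma pderiv_eq_zero_of_totalDegree_eq_zero {σ R : Type*} [CommSemiring R] (i : σ)
    (f : MvPolynomial σ R) (h : f.totalDegree = 0) : pderiv i f = 0 := by
  classical
  conv_lhs => rw [f.as_sum]
  rw [map_sum]
  refine Finset.sum_eq_zero fun s hs => ?_
  rw [pderiv_monomial, (totalDegree_eq_zero_iff σ f).mp h s hs i]
  simp

lemma multiDeriv_totalDegree_le {n m : ℕ} (v : Fin m → Fin (2*n)) (f : WeylPoly n) :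
    (multiDeriv v f).totalDegree ≤ f.totalDegree - m := by
  have : ∀ l : List (Fin (2*n)),
      ((l.foldr (fun i g => MvPolynomial.pderiv i g) f).totalDegree ≤ f.totalDegree - l.length) := by
    intro l
    induction l with
    | nil => simp
    | cons a l ih =>
      simp only [List.foldr_cons, List.length_cons]
      calc (pderiv a (l.foldr (fun i g => pderiv i g) f)).totalDegree
          ≤ (l.foldr (fun i g => pderiv i g) f).totalDegree - 1 := totalDegree_pderiv_le _ _
        _ ≤ f.totalDegree - l.length - 1 := by omega
        _ = f.totalDegree - (l.length + 1) := by omega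
  simpa [multiDeriv] using this (List.ofFn v)

lemma multiDeriv_eq_zero {n m : ℕ} (v : Fin m → Fin (2*n)) (f : WeylPoly n)
    (h : f.totalDegree < m) : multiDeriv v f = 0 := by
  cases m with
  | zero => omega
  | succ k =>
    have : multiDeriv v f = pderiv (v 0) (multiDeriv (fun i : Fin k => v i.succ) f) := by
      simp [multiDeriv, List.ofFn_succ]
    rw [this]
    apply pderiv_eq_zero_of_totalDegree_eq_zero
    have := multiDeriv_totalDegree_le (fun i : Fin k => v i.succ) f
    omega

lemma omegaHat_antisymm {n : ℕ} (hn : 1 ≤ n) (i j : Fin (2*n)) :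
    omegaHat n j i = -omegaHat n i j := by
  unfold omegaHat
  split_ifs <;> first | (exfalso; omega) | norm_num

/-- The `m`-th term of the Moyal product. -/
def moyalTerm (n : ℕ) (m : ℕ) (f g : WeylPoly n) : WeylPoly n :=
  MvPolynomial.C (Polynomial.C (1 / ((2:ℂ)^m * (Nat.factorial m : ℂ))) * Polynomial.X ^ m) *
    ∑ v : Fin m → Fin (2*n), ∑ w : Fin m → Fin (2*n),
      MvPolynomial.C (Polynomial.C (∏ s : Fin m, omegaHat n (v s) (w s))) *
        (multiDeriv v f * multiDeriv w g)

lemma moyal_eq_sum_range_three {n : ℕ} (f g : WeylPoly n) (hf : f.totalDegree ≤ 2) :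
    moyal n f g = ∑ m ∈ Finset.range 3, moyalTerm n m f g := by
  rw [moyal]
  refine Finset.sum_subset (Finset.range_subset_range.mpr (by omega)) ?_
  intro m _ hm
  rw [Finset.mem_range, not_lt] at hm
  have hm' : f.totalDegree < m := by omega
  refine mul_eq_zero_of_right _ (Finset.sum_eq_zero fun v _ => Finset.sum_eq_zero fun w _ => ?_)
  rw [multiDeriv_eq_zero v f hm', zero_mul, mul_zero]

lemma multiDeriv_zero {n : ℕ} (v : Fin 0 → Fin (2*n)) (f : WeylPoly n) :
    multiDeriv v f = f := by simp [multiDeriv]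

lemma multiDeriv_one {n : ℕ} (v : Fin 1 → Fin (2*n)) (f : WeylPoly n) :
    multiDeriv v f = pderiv (v 0) f := by
  simp [multiDeriv, List.ofFn_succ]

lemma sum_fun_one {n : ℕ} {M : Type*} [AddCommMonoid M] (F : (Fin 1 → Fin (2*n)) → M) :
    ∑ v : Fin 1 → Fin (2*n), F v = ∑ i : Fin (2*n), F (fun _ => i) := by
  refine Fintype.sum_equiv (Equiv.funUnique (Fin 1) (Fin (2*n))) _ _ fun v => ?_
  congr 1
  exact funext fun x => congrArg v (Subsingleton.elim x 0)

lemma moyalTerm_zero {n : ℕ} (f g : WeylPoly n) : moyalTerm n 0 f g = f * g := by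
  simp [moyalTerm, multiDeriv_zero, Nat.factorial]

lemma moyalTerm_one {n : ℕ} (f g : WeylPoly n) :
    moyalTerm n 1 f g =
      MvPolynomial.C (Polynomial.C (1/(2:ℂ)) * Polynomial.X) *
        ∑ i : Fin (2*n), ∑ j : Fin (2*n),
          MvPolynomial.C (Polynomial.C (omegaHat n i j)) *
            (pderiv i f * pderiv j g) := by
  rw [moyalTerm, sum_fun_one (M := WeylPoly n)]
  have h2 : ∀ i : Fin (2*n), (∑ w : Fin 1 → Fin (2*n),
      MvPolynomial.C (Polynomial.C (∏ s : Fin 1, omegaHat n ((fun _ : Fin 1 => i) s) (w s))) *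
        (multiDeriv (fun _ : Fin 1 => i) f * multiDeriv w g)) =
      ∑ j : Fin (2*n), MvPolynomial.C (Polynomial.C (omegaHat n i j)) *
        (pderiv i f * pderiv j g) := by
    intro i
    rw [sum_fun_one (M := WeylPoly n)]
    refine Finset.sum_congr rfl fun j _ => ?_
    simp [multiDeriv_one]
  rw [Finset.sum_congr rfl (fun i _ => h2 i)]
  congr 1
  norm_num [Nat.factorial]

lemma bracket_antisymm {n : ℕ} (hn : 1 ≤ n) (f g : WeylPoly n) :
    (∑ i : Fin (2*n), ∑ j : Fin (2*n),
        MvPolynomial.C (Polynomial.C (omegaHat n i j)) * (pderiv i g * pderiv j f)) =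
    - ∑ i : Fin (2*n), ∑ j : Fin (2*n),
        MvPolynomial.C (Polynomial.C (omegaHat n i j)) * (pderiv i f * pderiv j g) := by
  rw [Finset.sum_comm, ← Finset.sum_neg_distrib]
  refine Finset.sum_congr rfl fun i _ => ?_
  rw [← Finset.sum_neg_distrib]
  refine Finset.sum_congr rfl fun j _ => ?_
  rw [omegaHat_antisymm hn i j]
  push_cast [map_neg]
  ring

lemma moyalTerm_two_symm {n : ℕ} (hn : 1 ≤ n) (f g : WeylPoly n) :
    moyalTerm n 2 f g = moyalTerm n 2 g f := by
  rw [moyalTerm, moyalTerm, Finset.sum_comm]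
  apply congrArg (HMul.hMul _)
  refine Finset.sum_congr rfl fun v _ => Finset.sum_congr rfl fun w _ => ?_
  have : (∏ s : Fin 2, omegaHat n (w s) (v s)) = ∏ s : Fin 2, omegaHat n (v s) (w s) := by
    rw [Fin.prod_univ_two, Fin.prod_univ_two, omegaHat_antisymm hn (v 0) (w 0),
      omegaHat_antisymm hn (v 1) (w 1)]
    ring
  rw [this]
  ring


/-- For polynomials `f, g` of total degree at most `2` in the
`y`-variables, the Moyal commutator equals `ℏ` times the Poisson bracket with no
higher corrections:
`f ⋆ g − g ⋆ f = ℏ · ∑_{i,j} ω̂(i,j) (∂_i f)(∂_j g)`.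
In particular this commutator again has `y`-degree at most `2`; this underlies the
embedding of `sp_{2n}` into the Weyl algebra acting by inner derivations. -/
theorem moyal_commutator_of_degree_le_two (n : ℕ) (hn : 1 ≤ n)
    (f g : WeylPoly n) (hf : f.totalDegree ≤ 2) (hg : g.totalDegree ≤ 2) :
    moyal n f g - moyal n g f =
      MvPolynomial.C Polynomial.X *
        ∑ i : Fin (2*n), ∑ j : Fin (2*n),
          MvPolynomial.C (Polynomial.C (omegaHat n i j)) *
            (MvPolynomial.pderiv i f * MvPolynomial.pderiv j g)
    ∧ (moyal n f g - moyal n g f).totalDegree ≤ 2 := by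
  set S := ∑ i : Fin (2*n), ∑ j : Fin (2*n),
      MvPolynomial.C (Polynomial.C (omegaHat n i j)) *
        (MvPolynomial.pderiv i f * MvPolynomial.pderiv j g) with hS
  have key : moyal n f g - moyal n g f = MvPolynomial.C Polynomial.X * S := by
    rw [moyal_eq_sum_range_three f g hf, moyal_eq_sum_range_three g f hg]
    simp only [Finset.sum_range_succ, Finset.sum_range_zero, zero_add,
      show (3:ℕ) = 2 + 1 from rfl, show (2:ℕ) = 1 + 1 from rfl]
    rw [moyalTerm_zero, moyalTerm_zero, moyalTerm_one, moyalTerm_one,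
      moyalTerm_two_symm hn f g, bracket_antisymm hn f g, ← hS]
    have hc : (MvPolynomial.C (Polynomial.C (1/(2:ℂ)) * Polynomial.X) : WeylPoly n) +
        MvPolynomial.C (Polynomial.C (1/(2:ℂ)) * Polynomial.X) = MvPolynomial.C Polynomial.X := by
      rw [← map_add]
      congr 1
      rw [← add_mul, ← map_add]
      norm_num
    rw [mul_comm f g, show (1+1:ℕ) = 2 from rfl]
    have expand : ∀ (a t c s : WeylPoly n), a + c * s + t - (a + c * -s + t) = (c + c) * s := by
      intros; ring
    rw [expand, hc]
  refine ⟨key, ?_⟩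
  rw [key]
  calc (MvPolynomial.C Polynomial.X * S).totalDegree
      ≤ (MvPolynomial.C (Polynomial.X) : WeylPoly n).totalDegree + S.totalDegree :=
        totalDegree_mul _ _
    _ = S.totalDegree := by rw [totalDegree_C, zero_add]
    _ ≤ 2 := by
        refine (totalDegree_finset_sum _ _).trans (Finset.sup_le fun i _ => ?_)
        refine (totalDegree_finset_sum _ _).trans (Finset.sup_le fun j _ => ?_)
        calc (MvPolynomial.C (Polynomial.C (omegaHat n i j)) *
                (pderiv i f * pderiv j g)).totalDegree
            ≤ (MvPolynomial.C (Polynomial.C (omegaHat n i j)) : WeylPoly n).totalDegree +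
                (pderiv i f * pderiv j g).totalDegree := totalDegree_mul _ _
          _ ≤ 0 + ((pderiv i f).totalDegree + (pderiv j g).totalDegree) := by
              rw [totalDegree_C]
              exact add_le_add le_rfl (totalDegree_mul _ _)
          _ ≤ 2 := by
              have h1 := totalDegree_pderiv_le i f
              have h2 := totalDegree_pderiv_le j g
              omega

end
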